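/- For every integer j ≥ 2 and every t ∈ (0,1), κ_j(t) = Σ_{ℓ≥1} ℓ^j · A_{j−1}(t^ℓ) / (1 − t^ℓ)^j, and this series converges absolutely. -/

import Mathlib

open Real

/-- `κ₁(t) = ∑_{j≥1} j·t^j/(1−t^j)`. -/
noncomputable def kappa1 (t : ℝ) : ℝ :=
  ∑' j : ℕ, ((j : ℝ) + 1) * t ^ (j + 1) / (1 - t ^ (j + 1))

/-- The cumulants `κ_j(t)`, defined recursively by `κ_{j+1}(t) = t·κ_j'(t)`. -/
noncomputable def kappa : ℕ → ℝ → ℝ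
  | 0 => fun _ => 0
  | 1 => kappa1
  | n + 2 => fun t => t * deriv (kappa (n + 1)) t

/-- The Eulerian polynomials, via `A₀ = 1`, `A_{j+1} = t(1−t)A_j' + (j+1)tA_j`. -/
noncomputable def eulerianPoly : ℕ → Polynomial ℝ
  | 0 => 1
  | j + 1 => Polynomial.X * (1 - Polynomial.X) * Polynomial.derivative (eulerianPoly j)
      + ((j : ℝ) + 1) • (Polynomial.X * eulerianPoly j)

/-- Shifted variant: `myP 0 = X` with the same recurrence; then `myP (n+1) = A_{n+1}`. -/
noncomputable def myP : ℕ → Polynomial ℝ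
  | 0 => Polynomial.X
  | n + 1 => Polynomial.X * (1 - Polynomial.X) * Polynomial.derivative (myP n)
      + ((n : ℝ) + 1) • (Polynomial.X * myP n)

lemma myP_eq (n : ℕ) : myP (n + 1) = eulerianPoly (n + 1) := by
  induction n with
  | zero =>
    rw [myP, eulerianPoly, myP, eulerianPoly]
    simp
    ring
  | succ n ih =>
    rw [myP, eulerianPoly, ih]

/-- The term of the series for `κ_{j+1}`. -/
noncomputable def trm (j l : ℕ) (t : ℝ) : ℝ :=
  ((l : ℝ) + 1) ^ (j + 1) * (myP j).eval (t ^ (l + 1)) / (1 - t ^ (l + 1)) ^ (j + 1)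

/-- The derivative of `trm j l`. -/
noncomputable def trmD (j l : ℕ) (x : ℝ) : ℝ :=
  ((l : ℝ) + 1) ^ (j + 2) * x ^ l *
    (((myP j).derivative.eval (x ^ (l + 1)) * (1 - x ^ (l + 1))
      + ((j : ℝ) + 1) * (myP j).eval (x ^ (l + 1))) / (1 - x ^ (l + 1)) ^ (j + 2))

lemma trm_hasDerivAt (j l : ℕ) (x : ℝ) (hx : (1 : ℝ) - x ^ (l + 1) ≠ 0) :
    HasDerivAt (trm j l) (trmD j l x) x := by
  have h1 : HasDerivAt (fun x : ℝ => x ^ (l + 1)) (((l : ℝ) + 1) * x ^ l) x := by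
    simpa using hasDerivAt_pow (l + 1) x
  have hQ : HasDerivAt (fun x : ℝ => (myP j).eval (x ^ (l + 1)))
      ((myP j).derivative.eval (x ^ (l + 1)) * (((l : ℝ) + 1) * x ^ l)) x :=
    HasDerivAt.comp x ((myP j).hasDerivAt _) h1
  have h2 : HasDerivAt (fun x : ℝ => 1 - x ^ (l + 1)) (-(((l : ℝ) + 1) * x ^ l)) x :=
    h1.const_sub 1
  have hD : HasDerivAt (fun x : ℝ => (1 - x ^ (l + 1)) ^ (j + 1))
      (((j : ℕ) + 1 : ℕ) * (1 - x ^ (l + 1)) ^ j * (-(((l : ℝ) + 1) * x ^ l))) x := by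
    simpa using h2.fun_pow (j + 1)
  have hDne : (1 - x ^ (l + 1)) ^ (j + 1) ≠ 0 := pow_ne_zero _ hx
  have := ((hQ.const_mul (((l : ℝ) + 1) ^ (j + 1))).div hD hDne)
  convert this using 1
  · rfl
  · rfl
  · rfl
  unfold trmD
  field_simp
  push_cast
  ring

lemma mul_trmD (j l : ℕ) (t : ℝ) (ht : (1 : ℝ) - t ^ (l + 1) ≠ 0) :
    t * trmD j l t = trm (j + 1) l t := by
  have heval : (myP (j + 1)).eval (t ^ (l + 1)) =
      t ^ (l + 1) * (1 - t ^ (l + 1)) * (myP j).derivative.eval (t ^ (l + 1))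
        + ((j : ℝ) + 1) * (t ^ (l + 1) * (myP j).eval (t ^ (l + 1))) := by
    rw [myP]
    simp [Polynomial.eval_mul, Polynomial.eval_add]
  unfold trm trmD
  rw [heval]
  field_simp
  ring

set_option maxHeartbeats 1600000 in
theorem stmt_key (j : ℕ) : ∀ t ∈ Set.Ioo (0 : ℝ) 1,
    kappa (j + 1) t = ∑' l : ℕ, trm j l t ∧ Summable (fun l : ℕ => |trm j l t|) := by
  induction j with
  | zero =>
    intro t ht
    obtain ⟨ht0, ht1⟩ := ht
    have hden : ∀ l : ℕ, (0:ℝ) < 1 - t ^ (l + 1) := by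
      intro l
      have : t ^ (l + 1) < 1 := pow_lt_one₀ ht0.le ht1 (Nat.succ_ne_zero l)
      linarith
    constructor
    · show kappa1 t = _
      unfold kappa1 trm
      exact tsum_congr fun l => by simp [myP]
    · have hb : Summable fun l : ℕ => ((l : ℝ) + 1) * t ^ (l + 1) := by
        have h0 : Summable fun n : ℕ => (n : ℝ) ^ 1 * t ^ n :=
          summable_pow_mul_geometric_of_norm_lt_one 1
            (by rw [Real.norm_eq_abs, abs_lt]; constructor <;> linarith)
        have h1 : Summable fun n : ℕ => ((n + 1 : ℕ) : ℝ) ^ 1 * t ^ (n + 1) :=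
          (summable_nat_add_iff (f := fun n : ℕ => (n : ℝ) ^ 1 * t ^ n) 1).2 h0
        simpa using h1
      refine Summable.of_nonneg_of_le (fun l => abs_nonneg _) (fun l => ?_)
        (hb.mul_left (1 - t)⁻¹)
      have hl : trm 0 l t = ((l : ℝ) + 1) * t ^ (l + 1) / (1 - t ^ (l + 1)) := by
        unfold trm; simp [myP]
      rw [hl, abs_div, abs_of_nonneg (by positivity), abs_of_pos (hden l)]
      rw [div_le_iff₀ (hden l)]
      have h2 : t ^ (l + 1) ≤ t := by
        calc t ^ (l + 1) ≤ t ^ 1 := pow_le_pow_of_le_one ht0.le ht1.le (by omega)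
        _ = t := pow_one t
      have h3 : (1 - t) ≤ 1 - t ^ (l + 1) := by linarith
      calc ((l : ℝ) + 1) * t ^ (l + 1)
          = ((1 - t)⁻¹ * (((l : ℝ) + 1) * t ^ (l + 1))) * (1 - t) := by
            have h4 : (1 : ℝ) - t ≠ 0 := by intro h; rw [sub_eq_zero] at h; linarith
            field_simp
        _ ≤ ((1 - t)⁻¹ * (((l : ℝ) + 1) * t ^ (l + 1))) * (1 - t ^ (l + 1)) := by
            apply mul_le_mul_of_nonneg_left h3
            have h4 : (0:ℝ) < 1 - t := by linarith
            positivity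
  | succ j ih =>
    intro t ht
    obtain ⟨ht0, ht1⟩ := ht
    set b : ℝ := (1 + t) / 2 with hbdef
    have hb0 : 0 < b := by positivity
    have htb : t < b := by rw [hbdef]; linarith
    have hb1 : b < 1 := by rw [hbdef]; linarith
    have hts : t ∈ Set.Ioo (-b) b := ⟨by linarith, htb⟩
    have hxlt : ∀ x ∈ Set.Ioo (-b) b, ∀ l : ℕ, x ^ (l + 1) ≤ b := by
      intro x hx l
      calc x ^ (l + 1) ≤ |x ^ (l + 1)| := le_abs_self _
        _ = |x| ^ (l + 1) := abs_pow x _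
        _ ≤ b ^ (l + 1) := pow_le_pow_left₀ (abs_nonneg x) (abs_lt.2 ⟨hx.1, hx.2⟩).le _
        _ ≤ b ^ 1 := pow_le_pow_of_le_one hb0.le hb1.le (by omega)
        _ = b := pow_one b
    have hne : ∀ x ∈ Set.Ioo (-b) b, ∀ l : ℕ, (1:ℝ) - x ^ (l + 1) ≠ 0 := by
      intro x hx l
      have := hxlt x hx l
      intro h; nlinarith
    obtain ⟨C, hC⟩ := (isCompact_Icc (a := (-1:ℝ)) (b := 1)).exists_bound_of_continuousOn
      (f := fun y : ℝ => (myP j).derivative.eval y * (1 - y) + ((j : ℝ) + 1) * (myP j).eval y)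
      (by fun_prop)
    set C' : ℝ := max C 0 with hC'def
    have hC'0 : 0 ≤ C' := le_max_right _ _
    have hC' : ∀ y ∈ Set.Icc (-1:ℝ) 1,
        |(myP j).derivative.eval y * (1 - y) + ((j : ℝ) + 1) * (myP j).eval y| ≤ C' := by
      intro y hy
      exact le_trans (by simpa using hC y hy) (le_max_left _ _)
    set u : ℕ → ℝ := fun l => C' / (1 - b) ^ (j + 2) * (((l : ℝ) + 1) ^ (j + 2) * b ^ l)
      with hudef
    have hu : Summable u := by
      have h0 : Summable fun n : ℕ => (n : ℝ) ^ (j + 2) * b ^ n :=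
        summable_pow_mul_geometric_of_norm_lt_one (j + 2)
          (by rw [Real.norm_eq_abs, abs_lt]; constructor <;> linarith)
      have h1 : Summable fun n : ℕ => ((n + 1 : ℕ) : ℝ) ^ (j + 2) * b ^ (n + 1) :=
        (summable_nat_add_iff (f := fun n : ℕ => (n : ℝ) ^ (j + 2) * b ^ n) 1).2 h0
      have h2 : Summable fun n : ℕ => b⁻¹ * (((n + 1 : ℕ) : ℝ) ^ (j + 2) * b ^ (n + 1)) :=
        h1.mul_left _
      have h3 : Summable fun n : ℕ => ((n : ℝ) + 1) ^ (j + 2) * b ^ n := by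
        refine h2.congr fun n => ?_
        push_cast
        field_simp
        ring
      exact h3.mul_left _
    have hub0 : (0:ℝ) < 1 - b := by linarith
    have hbound : ∀ l : ℕ, ∀ x ∈ Set.Ioo (-b) b, ‖trmD j l x‖ ≤ u l := by
      intro l x hx
      have hxabs : |x| ≤ b := (abs_lt.2 ⟨hx.1, hx.2⟩).le
      have hy1 : x ^ (l + 1) ∈ Set.Icc (-1:ℝ) 1 := by
        constructor
        · have : |x ^ (l + 1)| ≤ 1 := by
            rw [abs_pow]
            exact pow_le_one₀ (abs_nonneg x) (le_of_lt (lt_of_le_of_lt hxabs hb1))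
          linarith [neg_abs_le (x ^ (l + 1))]
        · exact le_trans (hxlt x hx l) hb1.le
      have hden : (1 - b) ≤ 1 - x ^ (l + 1) := by
        have := hxlt x hx l; linarith
      have hdenpow : (1 - b) ^ (j + 2) ≤ (1 - x ^ (l + 1)) ^ (j + 2) :=
        pow_le_pow_left₀ hub0.le hden _
      have hdenpos : (0:ℝ) < (1 - x ^ (l + 1)) ^ (j + 2) := lt_of_lt_of_le (by positivity) hdenpow
      rw [Real.norm_eq_abs]
      unfold trmD
      rw [abs_mul, abs_mul, abs_div, abs_of_pos hdenpos]
      have e1 : |((l : ℝ) + 1) ^ (j + 2)| = ((l : ℝ) + 1) ^ (j + 2) := by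
        rw [abs_of_nonneg]; positivity
      rw [e1]
      have e2 : |x ^ l| ≤ b ^ l := by
        rw [abs_pow]; exact pow_le_pow_left₀ (abs_nonneg x) hxabs _
      have e3 := hC' _ hy1
      calc ((l : ℝ) + 1) ^ (j + 2) * |x ^ l| *
            (|(myP j).derivative.eval (x ^ (l + 1)) * (1 - x ^ (l + 1))
              + ((j : ℝ) + 1) * (myP j).eval (x ^ (l + 1))| / (1 - x ^ (l + 1)) ^ (j + 2))
          ≤ ((l : ℝ) + 1) ^ (j + 2) * b ^ l * (C' / (1 - b) ^ (j + 2)) := by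
            apply mul_le_mul
            · exact mul_le_mul_of_nonneg_left e2 (by positivity)
            · exact div_le_div₀ hC'0 e3 (by positivity) hdenpow
            · positivity
            · positivity
        _ = u l := by rw [hudef]; ring
    have hsum0 : Summable fun l : ℕ => trm j l t :=
      ((ih t ⟨ht0, ht1⟩).2).of_abs
    have hder : HasDerivAt (fun z : ℝ => ∑' l : ℕ, trm j l z) (∑' l : ℕ, trmD j l t) t :=
      hasDerivAt_tsum_of_isPreconnected hu isOpen_Ioo (convex_Ioo _ _).isPreconnected
        (fun l x hx => trm_hasDerivAt j l x (hne x hx l))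
        (fun l x hx => hbound l x hx) hts hsum0 hts
    have hEq : kappa (j + 1) =ᶠ[nhds t] fun z : ℝ => ∑' l : ℕ, trm j l z := by
      filter_upwards [isOpen_Ioo.mem_nhds (⟨ht0, ht1⟩ : t ∈ Set.Ioo (0:ℝ) 1)] with z hz
      exact (ih z hz).1
    have hderiv_eq : deriv (kappa (j + 1)) t = ∑' l : ℕ, trmD j l t := by
      rw [hEq.deriv_eq, hder.deriv]
    have htne : ∀ l : ℕ, (1:ℝ) - t ^ (l + 1) ≠ 0 := fun l => hne t hts l
    constructor
    · show t * deriv (kappa (j + 1)) t = _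
      rw [hderiv_eq, ← tsum_mul_left]
      exact tsum_congr fun l => mul_trmD j l t (htne l)
    · refine Summable.of_nonneg_of_le (fun l => abs_nonneg _) (fun l => ?_) hu
      rw [← mul_trmD j l t (htne l), abs_mul]
      calc |t| * |trmD j l t| ≤ 1 * |trmD j l t| := by
            apply mul_le_mul_of_nonneg_right _ (abs_nonneg _)
            rw [abs_of_pos ht0]; linarith
        _ = |trmD j l t| := one_mul _
        _ ≤ u l := by rw [← Real.norm_eq_abs]; exact hbound l t hts

/-- `κ_j(t) = ∑_{ℓ≥1} ℓ^j A_{j−1}(t^ℓ)/(1−t^ℓ)^j` for `j ≥ 2`, absolutely convergent. -/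
theorem stmt17 (j : ℕ) (hj : 2 ≤ j) (t : ℝ) (ht : t ∈ Set.Ioo (0 : ℝ) 1) :
    kappa j t =
        ∑' l : ℕ, ((l : ℝ) + 1) ^ j * (eulerianPoly (j - 1)).eval (t ^ (l + 1)) /
          (1 - t ^ (l + 1)) ^ j ∧
      Summable (fun l : ℕ =>
        |((l : ℝ) + 1) ^ j * (eulerianPoly (j - 1)).eval (t ^ (l + 1)) /
          (1 - t ^ (l + 1)) ^ j|) := by
  obtain ⟨m, rfl⟩ : ∃ m, j = m + 2 := ⟨j - 2, by omega⟩
  have key := stmt_key (m + 1) t ht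
  have hterm : ∀ l : ℕ, trm (m + 1) l t =
      ((l : ℝ) + 1) ^ (m + 2) * (eulerianPoly (m + 2 - 1)).eval (t ^ (l + 1)) /
        (1 - t ^ (l + 1)) ^ (m + 2) := by
    intro l
    unfold trm
    rw [myP_eq]
    norm_num
  constructor
  · rw [show m + 1 + 1 = m + 2 from rfl] at key
    rw [key.1]
    exact tsum_congr fun l => by rw [hterm l]
  · refine key.2.congr fun l => ?_
    rw [hterm l]
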